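/- Let A(t) : D ⊂ X → X be closed operators with common dense domain and bounded inverses, with t ↦ A(t)x continuously differentiable for each x ∈ D. Then for every x ∈ X the limit C(t)x := lim_{k→∞} k·(A(t)A(t−1/k)⁻¹ − 1)x exists uniformly in t ∈ (0,1] and equals Ȧ(t)A(t)⁻¹x, and t ↦ C(t)x is continuous. -/

import Mathlib

open Set Filter Topology

lemma aux_joint {X : Type*} [NormedAddCommGroup X] [NormedSpace ℝ X]
    (F : ℝ → X →L[ℝ] X) (s : Set ℝ) (M : ℝ)
    (hb : ∀ t ∈ s, ‖F t‖ ≤ M)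
    (hc : ∀ z, ContinuousOn (fun t => F t z) s) :
    ContinuousOn (fun p : ℝ × X => F p.1 p.2) (s ×ˢ (Set.univ : Set X)) := by
  rintro ⟨t₀, z₀⟩ ⟨ht₀, -⟩
  have h1 : ContinuousWithinAt (fun p : ℝ × X => F p.1 z₀) (s ×ˢ (Set.univ : Set X)) (t₀, z₀) :=
    (hc z₀ t₀ ht₀).comp (x := (t₀, z₀)) continuousWithinAt_fst (fun p (hp : p ∈ s ×ˢ (Set.univ : Set X)) => hp.1)
  have h2 : Tendsto (fun p : ℝ × X => F p.1 (p.2 - z₀))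
      (𝓝[s ×ˢ (Set.univ : Set X)] (t₀, z₀)) (𝓝 0) := by
    refine squeeze_zero_norm' (a := fun p : ℝ × X => M * ‖p.2 - z₀‖) ?_ ?_
    · filter_upwards [self_mem_nhdsWithin] with p hp
      calc ‖F p.1 (p.2 - z₀)‖ ≤ ‖F p.1‖ * ‖p.2 - z₀‖ := (F p.1).le_opNorm _
        _ ≤ M * ‖p.2 - z₀‖ := mul_le_mul_of_nonneg_right (hb p.1 hp.1) (norm_nonneg _)
    · have : Tendsto (fun p : ℝ × X => M * ‖p.2 - z₀‖) (𝓝 (t₀, z₀)) (𝓝 (M * ‖z₀ - z₀‖)) :=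
        (continuous_const.mul ((continuous_snd.sub continuous_const).norm)).tendsto _
      simpa using this.mono_left nhdsWithin_le_nhds
  have h3 := h2.add h1
  have heq : (fun p : ℝ × X => F p.1 (p.2 - z₀) + F p.1 z₀) = fun p : ℝ × X => F p.1 p.2 := by
    funext p; rw [map_sub, sub_add_cancel]
  rw [ContinuousWithinAt]
  rw [heq] at h3
  simpa using h3

/-- Under the C¹-condition, for every `x ∈ X` the limit
`C(t)x = lim_k k • (A t (A (t-1/k))⁻¹ x - x)` exists uniformly in `t ∈ (0,1]`, equals
`Ȧ t (A t)⁻¹ x`, and `t ↦ C(t)x` is continuous. -/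
theorem stmt13
    {X : Type*} [NormedAddCommGroup X] [NormedSpace ℝ X] [CompleteSpace X]
    (D : Submodule ℝ X) (hD : Dense (D : Set X))
    (A : ℝ → D →ₗ[ℝ] X)
    (hclosed : ∀ t, IsClosed {p : X × X | ∃ h : p.1 ∈ D, A t ⟨p.1, h⟩ = p.2})
    (R : ℝ → X →L[ℝ] X) (hmem : ∀ s x, R s x ∈ D)
    (hR1 : ∀ s x, A s ⟨R s x, hmem s x⟩ = x)
    (hR2 : ∀ s (y : D), R s (A s y) = y)
    (A' : ℝ → D → X)
    (hderiv : ∀ y : D, ∀ t ∈ Set.Icc (0:ℝ) 1,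
      HasDerivWithinAt (fun t => A t y) (A' t y) (Set.Icc 0 1) t)
    (hcont : ∀ y : D, ContinuousOn (fun t => A' t y) (Set.Icc (0:ℝ) 1)) :
    ∀ x : X,
      (∀ ε > (0:ℝ), ∃ K : ℕ, ∀ k ≥ K, ∀ t ∈ Set.Icc ((k:ℝ)⁻¹) 1,
        ‖(k:ℝ) • (A t ⟨R (t - (k:ℝ)⁻¹) x, hmem (t - (k:ℝ)⁻¹) x⟩ - x) -
          A' t ⟨R t x, hmem t x⟩‖ ≤ ε) ∧
      ContinuousOn (fun t => A' t ⟨R t x, hmem t x⟩) (Set.Icc (0:ℝ) 1) := by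
  -- compositions `A t ∘ R s` are bounded (closed graph theorem)
  have hcomp : ∀ t s : ℝ,
      Continuous ((A t).comp (LinearMap.codRestrict D (R s).toLinearMap (hmem s))) := by
    intro t s
    apply LinearMap.continuous_of_isClosed_graph
    have hg : (((A t).comp (LinearMap.codRestrict D (R s).toLinearMap (hmem s))).graph :
        Set (X × X)) = (fun p : X × X => (R s p.1, p.2)) ⁻¹'
          {p : X × X | ∃ h : p.1 ∈ D, A t ⟨p.1, h⟩ = p.2} := by
      ext ⟨a, b⟩
      simp only [SetLike.mem_coe, LinearMap.mem_graph_iff, Set.mem_preimage, Set.mem_setOf_eq,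
        LinearMap.coe_comp, Function.comp_apply, LinearMap.codRestrict_apply]
      constructor
      · rintro h; exact ⟨hmem s a, h.symm⟩
      · rintro ⟨h, hh⟩; exact hh.symm
    rw [hg]
    exact (hclosed t).preimage (((R s).continuous.comp continuous_fst).prodMk continuous_snd)
  set S : ℝ → X →L[ℝ] X := fun t =>
    ⟨(A t).comp (LinearMap.codRestrict D (R 0).toLinearMap (hmem 0)), hcomp t 0⟩ with hSdef
  set T : ℝ → X →L[ℝ] X := fun t =>
    ⟨(A 0).comp (LinearMap.codRestrict D (R t).toLinearMap (hmem t)), hcomp 0 t⟩ with hTdef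
  have hSapp : ∀ t z, S t z = A t ⟨R 0 z, hmem 0 z⟩ := fun t z => rfl
  have hTapp : ∀ t z, T t z = A 0 ⟨R t z, hmem t z⟩ := fun t z => rfl
  have hR0T : ∀ t z, R 0 (T t z) = R t z := fun t z => hR2 0 ⟨R t z, hmem t z⟩
  have hST : ∀ t, S t * T t = 1 := by
    intro t; ext z
    show A t ⟨R 0 (T t z), hmem 0 _⟩ = z
    have h : (⟨R 0 (T t z), hmem 0 _⟩ : D) = ⟨R t z, hmem t z⟩ := Subtype.ext (hR0T t z)
    rw [h]; exact hR1 t z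
  have hTS : ∀ t, T t * S t = 1 := by
    intro t; ext z
    show A 0 ⟨R t (S t z), hmem t _⟩ = z
    have h1 : R t (S t z) = R 0 z := hR2 t ⟨R 0 z, hmem 0 z⟩
    have h : (⟨R t (S t z), hmem t _⟩ : D) = ⟨R 0 z, hmem 0 z⟩ := Subtype.ext h1
    rw [h]; exact hR1 0 z
  -- nontrivial limit filters within the interval
  have hNB : ∀ t ∈ Icc (0:ℝ) 1, (𝓝[Icc (0:ℝ) 1 \ {t}] t).NeBot := by
    intro t ht
    rw [← mem_closure_iff_nhdsWithin_neBot]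
    rcases lt_or_eq_of_le ht.2 with h | h
    · apply closure_mono (show Ioc t 1 ⊆ Icc (0:ℝ) 1 \ {t} from fun z hz =>
        ⟨⟨le_trans ht.1 hz.1.le, hz.2⟩, ne_of_gt hz.1⟩)
      rw [closure_Ioc h.ne]
      exact ⟨le_refl t, h.le⟩
    · subst h
      apply closure_mono (show Ico (0:ℝ) 1 ⊆ Icc (0:ℝ) 1 \ {1} from fun z hz =>
        ⟨⟨hz.1, hz.2.le⟩, ne_of_lt hz.2⟩)
      rw [closure_Ico (by norm_num : (0:ℝ) ≠ 1)]
      exact ⟨by norm_num, le_refl 1⟩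
  -- the bounded operator G t := A' t ∘ (R 0 ·)
  have hGex : ∀ t ∈ Icc (0:ℝ) 1, ∃ Gt : X →L[ℝ] X,
      ∀ z, Gt z = A' t ⟨R 0 z, hmem 0 z⟩ := by
    intro t ht
    haveI := hNB t ht
    have htend : Tendsto (fun τ : ℝ => fun z => ((τ - t)⁻¹ • (S τ - S t)) z)
        (𝓝[Icc (0:ℝ) 1 \ {t}] t) (𝓝 (fun z => A' t ⟨R 0 z, hmem 0 z⟩)) := by
      rw [tendsto_pi_nhds]
      intro z
      have hd := hderiv ⟨R 0 z, hmem 0 z⟩ t ht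
      rw [hasDerivWithinAt_iff_tendsto_slope] at hd
      have heq : (fun τ : ℝ => ((τ - t)⁻¹ • (S τ - S t)) z)
          = slope (fun τ => A τ ⟨R 0 z, hmem 0 z⟩) t := by
        funext τ
        simp [slope_def_module, ContinuousLinearMap.smul_apply, ContinuousLinearMap.sub_apply,
          hSapp]
      rw [heq]
      exact hd
    exact ⟨continuousLinearMapOfTendsto (fun τ : ℝ => (τ - t)⁻¹ • (S τ - S t)) htend,
      fun z => rfl⟩
  obtain ⟨G, hG⟩ : ∃ G : ℝ → X →L[ℝ] X, ∀ t ∈ Icc (0:ℝ) 1, ∀ z,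
      G t z = A' t ⟨R 0 z, hmem 0 z⟩ := by
    choose f hf using hGex
    exact ⟨fun t => if ht : t ∈ Icc (0:ℝ) 1 then f t ht else 0,
      fun t ht z => by simp only [dif_pos ht]; exact hf t ht z⟩
  have hGcont : ∀ z, ContinuousOn (fun t => G t z) (Icc (0:ℝ) 1) :=
    fun z => (hcont ⟨R 0 z, hmem 0 z⟩).congr (fun t ht => hG t ht z)
  obtain ⟨M', hM'⟩ : ∃ M', ∀ i : Icc (0:ℝ) 1, ‖G (i : ℝ)‖ ≤ M' := by
    apply banach_steinhaus
    intro z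
    obtain ⟨C, hC⟩ := isCompact_Icc.bddAbove_image ((hGcont z).norm)
    exact ⟨C, fun i => hC ⟨(i : ℝ), i.2, rfl⟩⟩
  have hM'0 : (0:ℝ) ≤ M' :=
    le_trans (norm_nonneg _) (hM' ⟨0, by norm_num, by norm_num⟩)
  have hMnorm : ∀ t ∈ Icc (0:ℝ) 1, ‖G t‖ ≤ M' := fun t ht => hM' ⟨t, ht⟩
  -- S has derivative G within the interval
  have hSderiv : ∀ z, ∀ t ∈ Icc (0:ℝ) 1,
      HasDerivWithinAt (fun τ => S τ z) (G t z) (Icc 0 1) t := by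
    intro z t ht
    rw [hG t ht z]
    exact hderiv ⟨R 0 z, hmem 0 z⟩ t ht
  -- Lipschitz bound for S
  have hSlip : ∀ z, ∀ a ∈ Icc (0:ℝ) 1, ∀ b ∈ Icc (0:ℝ) 1,
      ‖S b z - S a z‖ ≤ M' * ‖z‖ * ‖b - a‖ := by
    intro z a ha b hb
    refine (convex_Icc (0:ℝ) 1).norm_image_sub_le_of_norm_hasDerivWithin_le
      (fun τ hτ => hSderiv z τ hτ) (fun τ hτ => ?_) ha hb
    calc ‖G τ z‖ ≤ ‖G τ‖ * ‖z‖ := (G τ).le_opNorm z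
      _ ≤ M' * ‖z‖ := mul_le_mul_of_nonneg_right (hMnorm τ hτ) (norm_nonneg z)
  have hScont' : ContinuousOn S (Icc (0:ℝ) 1) := by
    have hlip : LipschitzOnWith (Real.toNNReal M') S (Icc (0:ℝ) 1) := by
      rw [lipschitzOnWith_iff_dist_le_mul]
      intro a ha b hb
      rw [dist_eq_norm, dist_eq_norm, Real.coe_toNNReal _ hM'0]
      refine ContinuousLinearMap.opNorm_le_bound _
        (mul_nonneg hM'0 (norm_nonneg _)) (fun z => ?_)
      calc ‖(S a - S b) z‖ = ‖S a z - S b z‖ := rfl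
        _ ≤ M' * ‖z‖ * ‖a - b‖ := hSlip z b hb a ha
        _ = M' * ‖a - b‖ * ‖z‖ := by ring
    exact hlip.continuousOn
  -- T = (S)⁻¹ is continuous on the interval
  have hTinv : ∀ t, Ring.inverse (S t) = T t := by
    intro t
    have h : S t = ((⟨S t, T t, hST t, hTS t⟩ : (X →L[ℝ] X)ˣ) : X →L[ℝ] X) := rfl
    rw [h, Ring.inverse_unit]
    rfl
  have hTcont : ContinuousOn T (Icc (0:ℝ) 1) := by
    have h : ContinuousOn (fun t => Ring.inverse (S t)) (Icc (0:ℝ) 1) := by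
      intro a ha
      have hb : ContinuousAt (Ring.inverse : (X →L[ℝ] X) → _) (S a) :=
        NormedRing.inverse_continuousAt (⟨S a, T a, hST a, hTS a⟩ : (X →L[ℝ] X)ˣ)
      exact hb.comp_continuousWithinAt (hScont' a ha)
    exact h.congr (fun t ht => (hTinv t).symm)
  intro x
  -- key identity
  have hkey : ∀ τ ∈ Icc (0:ℝ) 1, ∀ s' : ℝ,
      A' τ ⟨R s' x, hmem s' x⟩ = G τ (T s' x) := by
    intro τ hτ s'
    rw [hG τ hτ (T s' x)]
    congr 1
    exact Subtype.ext (hR0T s' x).symm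
  have hhx : ContinuousOn (fun t => T t x) (Icc (0:ℝ) 1) :=
    (ContinuousLinearMap.apply ℝ X x).continuous.comp_continuousOn hTcont
  have hjoint := aux_joint G (Icc (0:ℝ) 1) M' hMnorm hGcont
  have hGT : ContinuousOn (fun t => G t (T t x)) (Icc (0:ℝ) 1) := by
    have := hjoint.comp ((continuous_id.continuousOn).prodMk hhx)
      (fun t ht => ⟨ht, trivial⟩)
    exact this
  have part2 : ContinuousOn (fun t => A' t ⟨R t x, hmem t x⟩) (Icc (0:ℝ) 1) :=
    hGT.congr (fun t ht => hkey t ht t)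
  refine ⟨?_, part2⟩
  intro ε hε
  have huc := isCompact_Icc.uniformContinuousOn_of_continuous hhx
  rw [Metric.uniformContinuousOn_iff] at huc
  obtain ⟨δ₁, hδ₁, h1⟩ := huc (ε / (2 * (M' + 1))) (by positivity)
  have hΨcont : ContinuousOn (fun p : ℝ × ℝ => G p.1 (T p.2 x) - G p.2 (T p.2 x))
      (Icc (0:ℝ) 1 ×ˢ Icc (0:ℝ) 1) := by
    apply ContinuousOn.sub
    · exact hjoint.comp ((continuous_fst.continuousOn).prodMk
        (hhx.comp (continuous_snd.continuousOn) (fun p (hp : p ∈ Icc (0:ℝ) 1 ×ˢ Icc (0:ℝ) 1) => hp.2)))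
        (fun p (hp : p ∈ Icc (0:ℝ) 1 ×ˢ Icc (0:ℝ) 1) => ⟨hp.1, trivial⟩)
    · exact hGT.comp (continuous_snd.continuousOn) (fun p hp => hp.2)
  have hucΨ := (isCompact_Icc.prod isCompact_Icc).uniformContinuousOn_of_continuous hΨcont
  rw [Metric.uniformContinuousOn_iff] at hucΨ
  obtain ⟨δ₂, hδ₂, h2⟩ := hucΨ (ε / 2) (by positivity)
  set δ := min δ₁ δ₂ with hδdef
  have hδ : 0 < δ := lt_min hδ₁ hδ₂
  refine ⟨⌈δ⁻¹⌉₊ + 1, ?_⟩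
  intro k hk t ht
  have hk1 : 1 ≤ k := le_trans (Nat.le_add_left 1 _) hk
  have hkpos : (0:ℝ) < (k:ℝ) := by exact_mod_cast Nat.lt_of_lt_of_le Nat.zero_lt_one hk1
  have hkδ : (k:ℝ)⁻¹ < δ := by
    have hlt : δ⁻¹ < (k:ℝ) := by
      calc δ⁻¹ ≤ (⌈δ⁻¹⌉₊ : ℝ) := Nat.le_ceil _
        _ < (k:ℝ) := by exact_mod_cast Nat.lt_of_lt_of_le (Nat.lt_succ_self _) hk
    calc (k:ℝ)⁻¹ < (δ⁻¹)⁻¹ := by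
          apply inv_strictAnti₀ (by positivity) hlt
      _ = δ := inv_inv δ
  set s := t - (k:ℝ)⁻¹ with hsdef
  have hinvnn : (0:ℝ) ≤ (k:ℝ)⁻¹ := inv_nonneg.2 hkpos.le
  have htI : t ∈ Icc (0:ℝ) 1 := ⟨le_trans hinvnn ht.1, ht.2⟩
  have hsI : s ∈ Icc (0:ℝ) 1 :=
    ⟨sub_nonneg.2 ht.1, le_trans (sub_le_self t hinvnn) ht.2⟩
  have hts : t - s = (k:ℝ)⁻¹ := by rw [hsdef]; ring
  have hstle : s ≤ t := sub_le_self t hinvnn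
  -- the uniform bound on the derivative difference
  have hbound : ∀ τ ∈ Icc s t, ‖G τ (T s x) - G t (T t x)‖ ≤ ε := by
    intro τ hτ
    have hτI : τ ∈ Icc (0:ℝ) 1 := ⟨le_trans hsI.1 hτ.1, le_trans hτ.2 htI.2⟩
    have hdst : dist s t < δ := by
      rw [Real.dist_eq, abs_sub_comm, abs_of_nonneg (by linarith [hstle])]
      rw [hts]; exact hkδ
    have hdτt : dist τ t < δ := by
      rw [Real.dist_eq, abs_sub_comm, abs_of_nonneg (by linarith [hτ.2])]
      have : t - τ ≤ t - s := by linarith [hτ.1]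
      calc t - τ ≤ t - s := this
        _ = (k:ℝ)⁻¹ := hts
        _ < δ := hkδ
    have e1 : ‖T s x - T t x‖ ≤ ε / (2 * (M' + 1)) := by
      have := h1 s hsI t htI (lt_of_lt_of_le hdst (min_le_left _ _))
      rw [dist_eq_norm] at this
      exact this.le
    have e2 : ‖G τ (T t x) - G t (T t x)‖ ≤ ε / 2 := by
      have := h2 (τ, t) ⟨hτI, htI⟩ (t, t) ⟨htI, htI⟩ (by
        rw [Prod.dist_eq]
        simp only [dist_self]
        rw [max_eq_left dist_nonneg]
        exact lt_of_lt_of_le hdτt (min_le_right _ _))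
      rw [dist_eq_norm] at this
      simpa using this.le
    calc ‖G τ (T s x) - G t (T t x)‖
        ≤ ‖G τ (T s x) - G τ (T t x)‖ + ‖G τ (T t x) - G t (T t x)‖ := by
          have := norm_add_le (G τ (T s x) - G τ (T t x)) (G τ (T t x) - G t (T t x))
          rw [sub_add_sub_cancel] at this
          exact this
      _ ≤ M' * ‖T s x - T t x‖ + ε / 2 := by
          refine add_le_add ?_ e2
          rw [← map_sub]
          calc ‖G τ (T s x - T t x)‖ ≤ ‖G τ‖ * ‖T s x - T t x‖ := (G τ).le_opNorm _
            _ ≤ M' * ‖T s x - T t x‖ :=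
              mul_le_mul_of_nonneg_right (hMnorm τ hτI) (norm_nonneg _)
      _ ≤ M' * (ε / (2 * (M' + 1))) + ε / 2 := by
          refine add_le_add (mul_le_mul_of_nonneg_left e1 hM'0) (le_refl _)
      _ ≤ ε := by
          have h3 : M' * (ε / (2 * (M' + 1))) ≤ ε / 2 := by
            have hpos : (0:ℝ) < 2 * (M' + 1) := by linarith
            rw [← mul_div_assoc, div_le_div_iff₀ hpos (by norm_num : (0:ℝ) < 2)]
            nlinarith
          linarith
  -- mean value inequality
  set c := A' t ⟨R t x, hmem t x⟩ with hcdef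
  have hcG : c = G t (T t x) := hkey t htI t
  have hmvt : ‖(A t ⟨R s x, hmem s x⟩ - t • c) - (A s ⟨R s x, hmem s x⟩ - s • c)‖
      ≤ ε * ‖t - s‖ := by
    refine (convex_Icc s t).norm_image_sub_le_of_norm_hasDerivWithin_le
      (f := fun τ => A τ ⟨R s x, hmem s x⟩ - τ • c)
      (f' := fun τ => A' τ ⟨R s x, hmem s x⟩ - c)
      (fun τ hτ => ?_) (fun τ hτ => ?_) (left_mem_Icc.2 hstle) (right_mem_Icc.2 hstle)
    · have hτI : τ ∈ Icc (0:ℝ) 1 := ⟨le_trans hsI.1 hτ.1, le_trans hτ.2 htI.2⟩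
      have hsub : Icc s t ⊆ Icc (0:ℝ) 1 := Icc_subset_Icc hsI.1 htI.2
      refine HasDerivWithinAt.sub
        (((hderiv ⟨R s x, hmem s x⟩ τ hτI).mono hsub)) ?_
      simpa using (hasDerivWithinAt_id τ (Icc s t)).smul_const c
    · have hτI : τ ∈ Icc (0:ℝ) 1 := ⟨le_trans hsI.1 hτ.1, le_trans hτ.2 htI.2⟩
      show ‖A' τ ⟨R s x, hmem s x⟩ - c‖ ≤ ε
      rw [hkey τ hτI s, hcG]
      exact hbound τ hτ
  have hAs : A s ⟨R s x, hmem s x⟩ = x := hR1 s x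
  have hknz : (k:ℝ) ≠ 0 := ne_of_gt hkpos
  have hnorm : ‖t - s‖ = (k:ℝ)⁻¹ := by rw [hts, Real.norm_eq_abs, abs_of_nonneg hinvnn]
  have hrw : (A t ⟨R s x, hmem s x⟩ - t • c) - (A s ⟨R s x, hmem s x⟩ - s • c)
      = (A t ⟨R s x, hmem s x⟩ - x) - (t - s) • c := by
    rw [hAs, sub_smul t s c]; abel
  rw [hrw] at hmvt
  have hfinal : ‖(k:ℝ) • (A t ⟨R s x, hmem s x⟩ - x) - c‖ ≤ ε := by
    have h5 : (k:ℝ) • ((A t ⟨R s x, hmem s x⟩ - x) - (t - s) • c)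
        = (k:ℝ) • (A t ⟨R s x, hmem s x⟩ - x) - c := by
      rw [smul_sub, hts, smul_smul, mul_inv_cancel₀ hknz, one_smul]
    calc ‖(k:ℝ) • (A t ⟨R s x, hmem s x⟩ - x) - c‖
        = ‖(k:ℝ) • ((A t ⟨R s x, hmem s x⟩ - x) - (t - s) • c)‖ := by rw [h5]
      _ = |(k:ℝ)| * ‖(A t ⟨R s x, hmem s x⟩ - x) - (t - s) • c‖ := by
          rw [norm_smul, Real.norm_eq_abs]
      _ ≤ (k:ℝ) * (ε * ‖t - s‖) := by
          rw [abs_of_pos hkpos]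
          exact mul_le_mul_of_nonneg_left hmvt hkpos.le
      _ = ε := by rw [hnorm]; field_simp
  exact hfinal
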